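/- For the uniform model on binary fragmentation trees of [n] (each tree has probability 2^{n-1}(n-1)!/(2n-2)!), the Markovian splitting rule is p(i,j) = w(i)w(j)/Z(i+j) with w(n) = (2n-2)!/(2^{2n-2}(n-1)!) and Z(n) = (2n-2)!/(2^{2n-3}(n-1)!); equivalently, the product formula P(T=t) = Π_{A∈t,#A≥2} p(#A₁,#A₂) yields the uniform distribution on B_[n]. -/

import Mathlib

open Finset

/-- `t` is a binary fragmentation (hierarchy) of the finite set `B`:
a laminar family of nonempty subsets of `B` containing `B`, in which every
member with at least two elements splits into exactly two disjoint nonempty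
members (its two children), recursively down to singletons. -/
def IsBinFrag (B : Finset ℕ) (t : Finset (Finset ℕ)) : Prop :=
  B ∈ t ∧ (∀ A ∈ t, A.Nonempty ∧ A ⊆ B) ∧
  (∀ C ∈ t, ∀ D ∈ t, C ⊆ D ∨ D ⊆ C ∨ Disjoint C D) ∧
  (∀ b ∈ B, {b} ∈ t) ∧
  (∀ A ∈ t, 2 ≤ A.card →
    ∃ C ∈ t, ∃ D ∈ t, Disjoint C D ∧ C ∪ D = A ∧ C.Nonempty ∧ D.Nonempty)

-- The (finite) set of all binary fragmentations of `B`.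
open scoped Classical in
noncomputable def allBinFrags (B : Finset ℕ) : Finset (Finset (Finset ℕ)) :=
  B.powerset.powerset.filter (fun t => IsBinFrag B t)

/-- `ch` assigns to each internal vertex `A` of the fragmentation `t` its
two children `(ch A).1`, `(ch A).2`. -/
def IsChildFun (t : Finset (Finset ℕ)) (ch : Finset ℕ → Finset ℕ × Finset ℕ) : Prop :=
  ∀ A ∈ t, 2 ≤ A.card →
    (ch A).1 ∈ t ∧ (ch A).2 ∈ t ∧ Disjoint (ch A).1 (ch A).2 ∧
    (ch A).1 ∪ (ch A).2 = A ∧ (ch A).1.Nonempty ∧ (ch A).2.Nonempty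

/-- for the β = -3/2 Gibbs weights `w n = (2n-2)!/(2^{2n-2}(n-1)!)`,
`Z n = (2n-2)!/(2^{2n-3}(n-1)!)`, the Markovian product formula
`∏_{A ∈ t, #A ≥ 2} p(#A₁, #A₂)` yields the uniform distribution
`2^{n-1}(n-1)!/(2n-2)!` on binary fragmentation trees of `[n]`. -/
noncomputable def ffrag (n : ℕ) : ℝ :=
  (2 ^ (n - 1) * ((n - 1).factorial : ℝ)) / ((2 * n - 2).factorial : ℝ)

lemma ffrag_split (a b : ℕ) :
    (((2*a).factorial : ℝ) / (2 ^ (2*a) * (a.factorial : ℝ))) *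
      (((2*b).factorial : ℝ) / (2 ^ (2*b) * (b.factorial : ℝ))) /
      (((2*a+2*b+2).factorial : ℝ) / (2 ^ (2*a+2*b+1) * ((a+b+1).factorial : ℝ))) *
      ffrag (a+1) * ffrag (b+1) = ffrag (a+b+2) := by
  have h1 : 2*(a+1) - 2 = 2*a := by omega
  have h2 : 2*(b+1) - 2 = 2*b := by omega
  have h3 : 2*(a+b+2) - 2 = 2*a+2*b+2 := by omega
  have h4 : a+b+2 - 1 = a+b+1 := by omega
  simp only [ffrag, h1, h2, h3, h4, Nat.add_sub_cancel]
  have fa : (a.factorial : ℝ) ≠ 0 := Nat.cast_ne_zero.mpr a.factorial_ne_zero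
  have fb : (b.factorial : ℝ) ≠ 0 := Nat.cast_ne_zero.mpr b.factorial_ne_zero
  have f2a : (((2*a).factorial : ℕ) : ℝ) ≠ 0 := Nat.cast_ne_zero.mpr (2*a).factorial_ne_zero
  have f2b : (((2*b).factorial : ℕ) : ℝ) ≠ 0 := Nat.cast_ne_zero.mpr (2*b).factorial_ne_zero
  have fab : (((a+b+1).factorial : ℕ) : ℝ) ≠ 0 := Nat.cast_ne_zero.mpr (a+b+1).factorial_ne_zero
  have f2ab : (((2*a+2*b+2).factorial : ℕ) : ℝ) ≠ 0 := Nat.cast_ne_zero.mpr (2*a+2*b+2).factorial_ne_zero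
  have p2 : (2:ℝ) ≠ 0 := two_ne_zero
  field_simp
  ring

lemma p_mul (w Z : ℕ → ℝ)
    (hw : ∀ n : ℕ, 1 ≤ n →
      w n = ((2 * n - 2).factorial : ℝ) / (2 ^ (2 * n - 2) * ((n - 1).factorial : ℝ)))
    (hZ : ∀ n : ℕ, 2 ≤ n →
      Z n = ((2 * n - 2).factorial : ℝ) / (2 ^ (2 * n - 3) * ((n - 1).factorial : ℝ)))
    (p : ℕ → ℕ → ℝ)
    (hp : ∀ i j : ℕ, 1 ≤ i → 1 ≤ j → p i j = w i * w j / Z (i + j))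
    (i j : ℕ) (hi : 1 ≤ i) (hj : 1 ≤ j) :
    p i j * ffrag i * ffrag j = ffrag (i + j) := by
  obtain ⟨a, rfl⟩ : ∃ a, i = a + 1 := ⟨i - 1, by omega⟩
  obtain ⟨b, rfl⟩ : ∃ b, j = b + 1 := ⟨j - 1, by omega⟩
  rw [hp _ _ hi hj, hw _ hi, hw _ hj, hZ _ (by omega)]
  have h1 : 2*(a+1) - 2 = 2*a := by omega
  have h2 : 2*(b+1) - 2 = 2*b := by omega
  have h3 : 2*(a+1+(b+1)) - 2 = 2*a+2*b+2 := by omega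
  have h4 : 2*(a+1+(b+1)) - 3 = 2*a+2*b+1 := by omega
  have h5 : a+1+(b+1) - 1 = a+b+1 := by omega
  have h7 : 2*(a+b+2) - 2 = 2*a+2*b+2 := by omega
  have h8 : 2*(a+b+2) - 3 = 2*a+2*b+1 := by omega
  have h9 : a+b+2 - 1 = a+b+1 := by omega
  have h6 : a+1+(b+1) = a+b+2 := by omega
  simp only [h1, h2, h3, h4, h5, h6, h7, h8, h9, Nat.add_sub_cancel]
  exact ffrag_split a b

open scoped Classical in
lemma key_induction (p : ℕ → ℕ → ℝ)
    (hpf : ∀ i j : ℕ, 1 ≤ i → 1 ≤ j → p i j * ffrag i * ffrag j = ffrag (i + j)) :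
    ∀ N : ℕ, ∀ B : Finset ℕ, B.card ≤ N → B.Nonempty →
    ∀ t : Finset (Finset ℕ), IsBinFrag B t →
    ∀ ch : Finset ℕ → Finset ℕ × Finset ℕ, IsChildFun t ch →
      ∏ A ∈ t.filter (fun A => 2 ≤ A.card), p (ch A).1.card (ch A).2.card = ffrag B.card := by
  intro N
  induction N with
  | zero =>
      intro B hB hne
      have := Finset.card_pos.mpr hne
      omega
  | succ N IH =>
      intro B hB hne t ht ch hch
      obtain ⟨hBt, hmem, hlam, hsing, _⟩ := ht
      by_cases h1 : B.card ≤ 1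
      · have hcard : B.card = 1 := by
          have := Finset.card_pos.mpr hne; omega
        have hempty : t.filter (fun A => 2 ≤ A.card) = ∅ := by
          rw [Finset.filter_eq_empty_iff]
          intro A hA
          have hsub := (hmem A hA).2
          have := Finset.card_le_card hsub
          omega
        rw [hempty, Finset.prod_empty, hcard]
        simp [ffrag]
      · push_neg at h1
        obtain ⟨hC, hD, hdisj, huni, hCne, hDne⟩ := hch B hBt (by omega)
        set C := (ch B).1 with hCdef
        set D := (ch B).2 with hDdef
        have hCB : C ⊆ B := huni ▸ Finset.subset_union_left
        have hDB : D ⊆ B := huni ▸ Finset.subset_union_right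
        have hcardsum : C.card + D.card = B.card := by
          rw [← Finset.card_union_of_disjoint hdisj, huni]
        have hCpos : 1 ≤ C.card := Finset.card_pos.mpr hCne
        have hDpos : 1 ≤ D.card := Finset.card_pos.mpr hDne
        -- every non-root node sits below C or D
        have subCD : ∀ A ∈ t, A ≠ B → A ⊆ C ∨ A ⊆ D := by
          intro A hA hAB
          have hAB' : A ⊆ B := (hmem A hA).2
          have hAne : A.Nonempty := (hmem A hA).1
          rcases hlam A hA C hC with h | h | h
          · exact Or.inl h
          · rcases hlam A hA D hD with h2 | h2 | h2
            · exfalso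
              obtain ⟨x, hx⟩ := hCne
              exact Finset.disjoint_left.mp hdisj hx (h2 (h hx))
            · exact absurd (Finset.Subset.antisymm hAB'
                (huni ▸ Finset.union_subset h h2)) hAB
            · left
              intro x hx
              have hxB : x ∈ C ∪ D := huni ▸ hAB' hx
              rcases Finset.mem_union.mp hxB with h3 | h3
              · exact h3
              · exact absurd h3 (Finset.disjoint_left.mp h2 hx)
          · right
            intro x hx
            have hxB : x ∈ C ∪ D := huni ▸ hAB' hx
            rcases Finset.mem_union.mp hxB with h3 | h3
            · exact absurd h3 (Finset.disjoint_left.mp h hx)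
            · exact h3
        have hBnotC : ¬ B ⊆ C := by
          intro hsub
          obtain ⟨x, hx⟩ := hDne
          exact Finset.disjoint_left.mp hdisj (hsub (hDB hx)) hx
        have hBnotD : ¬ B ⊆ D := by
          intro hsub
          obtain ⟨x, hx⟩ := hCne
          exact Finset.disjoint_right.mp hdisj (hsub (hCB hx)) hx
        -- subtrees
        set tC := t.filter (fun A => A ⊆ C) with htCdef
        set tD := t.filter (fun A => A ⊆ D) with htDdef
        have hfragC : IsBinFrag C tC := by
          refine ⟨Finset.mem_filter.mpr ⟨hC, subset_rfl⟩, ?_, ?_, ?_, ?_⟩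
          · intro A hA
            have h' := Finset.mem_filter.mp hA
            exact ⟨(hmem A h'.1).1, h'.2⟩
          · intro X hX Y hY
            exact hlam X (Finset.mem_filter.mp hX).1 Y (Finset.mem_filter.mp hY).1
          · intro b hb
            exact Finset.mem_filter.mpr ⟨hsing b (hCB hb), Finset.singleton_subset_iff.mpr hb⟩
          · intro A hA hA2
            have h' := Finset.mem_filter.mp hA
            obtain ⟨hX, hY, hd, hu, hxne, hyne⟩ := hch A h'.1 hA2
            have hx : (ch A).1 ⊆ C := (Finset.subset_union_left.trans hu.le).trans h'.2
            have hy : (ch A).2 ⊆ C := (Finset.subset_union_right.trans hu.le).trans h'.2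
            exact ⟨_, Finset.mem_filter.mpr ⟨hX, hx⟩, _, Finset.mem_filter.mpr ⟨hY, hy⟩,
              hd, hu, hxne, hyne⟩
        have hfragD : IsBinFrag D tD := by
          refine ⟨Finset.mem_filter.mpr ⟨hD, subset_rfl⟩, ?_, ?_, ?_, ?_⟩
          · intro A hA
            have h' := Finset.mem_filter.mp hA
            exact ⟨(hmem A h'.1).1, h'.2⟩
          · intro X hX Y hY
            exact hlam X (Finset.mem_filter.mp hX).1 Y (Finset.mem_filter.mp hY).1
          · intro b hb
            exact Finset.mem_filter.mpr ⟨hsing b (hDB hb), Finset.singleton_subset_iff.mpr hb⟩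
          · intro A hA hA2
            have h' := Finset.mem_filter.mp hA
            obtain ⟨hX, hY, hd, hu, hxne, hyne⟩ := hch A h'.1 hA2
            have hx : (ch A).1 ⊆ D := (Finset.subset_union_left.trans hu.le).trans h'.2
            have hy : (ch A).2 ⊆ D := (Finset.subset_union_right.trans hu.le).trans h'.2
            exact ⟨_, Finset.mem_filter.mpr ⟨hX, hx⟩, _, Finset.mem_filter.mpr ⟨hY, hy⟩,
              hd, hu, hxne, hyne⟩
        have hchC : IsChildFun tC ch := by
          intro A hA hA2
          have h' := Finset.mem_filter.mp hA
          obtain ⟨hX, hY, hd, hu, hxne, hyne⟩ := hch A h'.1 hA2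
          have hx : (ch A).1 ⊆ C := (Finset.subset_union_left.trans hu.le).trans h'.2
          have hy : (ch A).2 ⊆ C := (Finset.subset_union_right.trans hu.le).trans h'.2
          exact ⟨Finset.mem_filter.mpr ⟨hX, hx⟩, Finset.mem_filter.mpr ⟨hY, hy⟩,
            hd, hu, hxne, hyne⟩
        have hchD : IsChildFun tD ch := by
          intro A hA hA2
          have h' := Finset.mem_filter.mp hA
          obtain ⟨hX, hY, hd, hu, hxne, hyne⟩ := hch A h'.1 hA2
          have hx : (ch A).1 ⊆ D := (Finset.subset_union_left.trans hu.le).trans h'.2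
          have hy : (ch A).2 ⊆ D := (Finset.subset_union_right.trans hu.le).trans h'.2
          exact ⟨Finset.mem_filter.mpr ⟨hX, hx⟩, Finset.mem_filter.mpr ⟨hY, hy⟩,
            hd, hu, hxne, hyne⟩
        -- split of the product index set
        have hsplit : t.filter (fun A => 2 ≤ A.card) =
            insert B ((tC.filter (fun A => 2 ≤ A.card)) ∪ (tD.filter (fun A => 2 ≤ A.card))) := by
          ext A
          simp only [Finset.mem_insert, Finset.mem_union, Finset.mem_filter, htCdef, htDdef]
          constructor
          · rintro ⟨hA, h2⟩
            by_cases hAB : A = B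
            · exact Or.inl hAB
            · rcases subCD A hA hAB with h | h
              · exact Or.inr (Or.inl ⟨⟨hA, h⟩, h2⟩)
              · exact Or.inr (Or.inr ⟨⟨hA, h⟩, h2⟩)
          · rintro (rfl | ⟨⟨hA, _⟩, h2⟩ | ⟨⟨hA, _⟩, h2⟩)
            · exact ⟨hBt, by omega⟩
            · exact ⟨hA, h2⟩
            · exact ⟨hA, h2⟩
        have hBnotin : B ∉ (tC.filter (fun A => 2 ≤ A.card)) ∪ (tD.filter (fun A => 2 ≤ A.card)) := by
          simp only [Finset.mem_union, Finset.mem_filter, htCdef, htDdef]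
          rintro (⟨⟨_, h⟩, _⟩ | ⟨⟨_, h⟩, _⟩)
          · exact hBnotC h
          · exact hBnotD h
        have hdisjUV : Disjoint (tC.filter (fun A => 2 ≤ A.card))
            (tD.filter (fun A => 2 ≤ A.card)) := by
          rw [Finset.disjoint_left]
          intro A hA hA'
          simp only [Finset.mem_filter, htCdef, htDdef] at hA hA'
          obtain ⟨x, hx⟩ := (hmem A hA.1.1).1
          exact Finset.disjoint_left.mp hdisj (hA.1.2 hx) (hA'.1.2 hx)
        rw [hsplit, Finset.prod_insert hBnotin, Finset.prod_union hdisjUV,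
          IH C (by omega) hCne tC hfragC ch hchC,
          IH D (by omega) hDne tD hfragD ch hchD]
        have := hpf C.card D.card hCpos hDpos
        rw [hcardsum] at this
        rw [← this]; ring

theorem uniform_model_splitting_rule
    (w Z : ℕ → ℝ)
    (hw : ∀ n : ℕ, 1 ≤ n →
      w n = ((2 * n - 2).factorial : ℝ) / (2 ^ (2 * n - 2) * ((n - 1).factorial : ℝ)))
    (hZ : ∀ n : ℕ, 2 ≤ n →
      Z n = ((2 * n - 2).factorial : ℝ) / (2 ^ (2 * n - 3) * ((n - 1).factorial : ℝ)))
    (p : ℕ → ℕ → ℝ)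
    (hp : ∀ i j : ℕ, 1 ≤ i → 1 ≤ j → p i j = w i * w j / Z (i + j)) :
    ∀ n : ℕ, 1 ≤ n → ∀ t ∈ allBinFrags (Finset.Icc 1 n),
      ∀ ch : Finset ℕ → Finset ℕ × Finset ℕ, IsChildFun t ch →
        ∏ A ∈ t.filter (fun A => 2 ≤ A.card), p (ch A).1.card (ch A).2.card =
          (2 ^ (n - 1) * ((n - 1).factorial : ℝ)) / ((2 * n - 2).factorial : ℝ) := by
  classical
  intro n hn t ht ch hch
  have hfrag : IsBinFrag (Finset.Icc 1 n) t := (Finset.mem_filter.mp ht).2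
  have hcard : (Finset.Icc 1 n).card = n := by
    rw [Nat.card_Icc]; omega
  have hne : (Finset.Icc 1 n).Nonempty := ⟨1, Finset.mem_Icc.mpr ⟨le_refl 1, hn⟩⟩
  have := key_induction p (p_mul w Z hw hZ p hp) (Finset.Icc 1 n).card (Finset.Icc 1 n)
    le_rfl hne t hfrag ch hch
  rw [this, hcard, ffrag]
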